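/- For n ≥ 2 and 1 ≤ k < n, the ∃-generalized context K^k_{n,ge} = (S_n ∪ {g_1}, S_n ∪ {m_12}, J), obtained from K^k_n by replacing m_1 and m_2 with a single attribute m_12 whose extension is m_1' ∪ m_2' = S_n, is isomorphic to the context (S_{n+1}, S_{n+1}, ≠) (identifying g_1 and m_12 with n+1), and hence has exactly 2^{n+1} formal concepts. -/
import Mathlib


/-- The intent (attribute derivation) of a set of objects. -/
def intentOf {G M : Type*} (I : G → M → Prop) (A : Set G) : Set M :=
  {m | ∀ g ∈ A, I g m}

/-- The extent (object derivation) of a set of attributes. -/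
def extentOf {G M : Type*} (I : G → M → Prop) (B : Set M) : Set G :=
  {g | ∀ m ∈ B, I g m}

/-- The formal concepts of a context: pairs `(A, B)` with `A' = B` and `B' = A`. -/
def Concepts {G M : Type*} (I : G → M → Prop) : Set (Set G × Set M) :=
  {p | intentOf I p.1 = p.2 ∧ extentOf I p.2 = p.1}

/-- The ∃-generalized context `K^k_{n,ge} = (S_n ∪ {g_1}, S_n ∪ {m_12}, J)`:
objects are `Fin n ⊕ Unit` (with `Sum.inr () = g_1`), attributes are
`Fin n ⊕ Unit` (with `Sum.inr () = m_12`); `J` agrees with the incidence of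
`K^k_n` on the attributes in `S_n`, and the extension of `m_12` is
`m_1' ∪ m_2' = S_n` (this is the same context for every `1 ≤ k < n`). -/
def Kge (n : ℕ) : (Fin n ⊕ Unit) → (Fin n ⊕ Unit) → Prop
  | Sum.inl g, Sum.inl m => g ≠ m
  | Sum.inr _, Sum.inl _ => True
  | Sum.inl _, Sum.inr _ => True
  | Sum.inr _, Sum.inr _ => False

lemma Kge_iff_ne (n : ℕ) (g m : Fin n ⊕ Unit) : Kge n g m ↔ g ≠ m := by
  rcases g with g | g <;> rcases m with m | m <;> simp [Kge]

def myEquiv (n : ℕ) : (Fin n ⊕ Unit) ≃ Fin (n + 1) where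
  toFun := Sum.elim Fin.castSucc (fun _ => Fin.last n)
  invFun := fun i => if h : i = Fin.last n then Sum.inr () else Sum.inl (i.castPred h)
  left_inv := by
    rintro (g | g)
    · simp [Fin.castSucc_lt_last g |>.ne]
    · simp
  right_inv := by
    intro i
    by_cases h : i = Fin.last n <;> simp [h]

lemma ne_concepts {G : Type*} :
    Concepts (fun g m : G => g ≠ m) = {p | p.2 = p.1ᶜ} := by
  ext p
  have h1 : intentOf (fun g m : G => g ≠ m) p.1 = p.1ᶜ := by
    ext m; simp [intentOf, Set.mem_compl_iff]
    constructor
    · intro h hm; exact h m hm rfl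
    · intro h g hg he; exact h (he ▸ hg)
  have h2 : extentOf (fun g m : G => g ≠ m) p.2 = p.2ᶜ := by
    ext g; simp [extentOf, Set.mem_compl_iff]
    constructor
    · intro h hg; exact h g hg rfl
    · intro h m hm he; exact h (he ▸ hm)
  simp only [Concepts, Set.mem_setOf_eq, h1, h2]
  constructor
  · rintro ⟨h, _⟩; exact h.symm
  · rintro h; exact ⟨h.symm, by rw [h, compl_compl]⟩

def conceptsEquiv {G : Type*} : Concepts (fun g m : G => g ≠ m) ≃ Set G where
  toFun p := p.1.1
  invFun A := ⟨(A, Aᶜ), by rw [ne_concepts]; simp⟩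
  left_inv := by
    rintro ⟨⟨A, B⟩, hp⟩
    rw [ne_concepts] at hp
    simp only [Set.mem_setOf_eq] at hp
    simp [hp]
  right_inv := fun A => rfl

/-- For `n ≥ 2` and `1 ≤ k < n`, the ∃-generalized context `K^k_{n,ge}` is
isomorphic to `(S_{n+1}, S_{n+1}, ≠)` — via bijections of objects and of
attributes preserving and reflecting incidence and sending `g_1` and `m_12`
to `n+1` — and hence has exactly `2^(n+1)` formal concepts. -/
theorem stmt10 (n k : ℕ) (hn : 2 ≤ n) (hk1 : 1 ≤ k) (hkn : k < n) :
    (∃ (e : (Fin n ⊕ Unit) ≃ Fin (n + 1)) (f : (Fin n ⊕ Unit) ≃ Fin (n + 1)),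
        e (Sum.inr ()) = Fin.last n ∧ f (Sum.inr ()) = Fin.last n ∧
        ∀ g m, Kge n g m ↔ e g ≠ f m) ∧
    Nat.card (Concepts (Kge n)) = 2 ^ (n + 1) := by
  constructor
  · refine ⟨myEquiv n, myEquiv n, rfl, rfl, fun g m => ?_⟩
    rw [Kge_iff_ne]
    exact (Equiv.injective (myEquiv n)).ne_iff.symm
  · have hK : Kge n = (fun g m : Fin n ⊕ Unit => g ≠ m) := by
      ext g m; exact Kge_iff_ne n g m
    rw [hK, Nat.card_congr (conceptsEquiv (G := Fin n ⊕ Unit))]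
    simp [Nat.card_eq_fintype_card]
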